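/- arXiv:1207.1330 — 2 statements merged into one kernel-verified Lean document; each statement's English description precedes it below -/
import Mathlib

section
/- Let Γ be a finite ranked poset with minimal element * such that for all a < b with rk(b) − rk(a) ≥ 3 the open interval (a,b) is connected as a graph under the comparability relation (equivalently, the order complex of (a,b) is connected). Then for all a < b the closed interval [a,b] is uniform; in particular Γ itself is uniform. -/
open scoped Classical DirectSum
noncomputable section
namespace SplittingAlg

variable (F : Type) [Field F]

/-! ### Order complex cochains of a finite poset -/

variable (P : Type) [Fintype P] [PartialOrder P]

/-- An `n`-cell of the order complex: a strictly increasing chain of `n+1` elements. -/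
def Cell (n : ℕ) : Type := {b : Fin (n + 1) → P // StrictMono b}

instance (n : ℕ) : Fintype (Cell P n) := by unfold Cell; infer_instance

/-- Simplicial `n`-cochains with coefficients in `F`. -/
def Coch (n : ℕ) : Type := Cell P n →₀ F

instance (n : ℕ) : AddCommGroup (Coch F P n) := Finsupp.instAddCommGroup
instance (n : ℕ) : Module F (Coch F P n) := Finsupp.module _ _

/-- Evaluation of a cochain on a cell. -/
def capp (n : ℕ) (f : Coch F P n) (b : Cell P n) : F := @Finsupp.toFun (Cell P n) F _ f b

/-- The coboundary of a basis cell: the signed sum of all insertions of elements of `P`. -/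
def insChain (n : ℕ) (b : Cell P n) : Coch F P (n + 1) :=
  ∑ x : P, ∑ j : Fin (n + 2),
    if h : StrictMono (j.insertNth x b.1)
    then ((-1 : F) ^ (j : ℕ)) • Finsupp.single (⟨j.insertNth x b.1, h⟩ : Cell P (n + 1)) (1 : F)
    else 0

/-- The simplicial coboundary map. -/
def cob (n : ℕ) : Coch F P n →ₗ[F] Coch F P (n + 1) :=
  Finsupp.linearCombination F (insChain F P n)

/-- Cocycles. -/
def Zc (n : ℕ) : Submodule F (Coch F P n) := LinearMap.ker (cob F P n)

/-- Coboundaries (unreduced). -/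
def Bc : (n : ℕ) → Submodule F (Coch F P n)
  | 0 => ⊥
  | n + 1 => LinearMap.range (cob F P n)

/-- Unreduced simplicial cohomology of the order complex of `P`. -/
abbrev Hc (n : ℕ) := Zc F P n ⧸ (Bc F P n).comap (Zc F P n).subtype

/-- The vertex cell attached to `v`. -/
def vert (v : P) : Cell P 0 :=
  ⟨fun _ => v, by intro i j h; exact absurd (Fin.ext (by omega)) h.ne⟩

/-- Coboundaries (reduced): in degree `0` we also quotient by the image of the augmentation. -/
def Bred : (n : ℕ) → Submodule F (Coch F P n)
  | 0 => Submodule.span F {∑ v : P, Finsupp.single (vert P v) (1 : F)}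
  | n + 1 => LinearMap.range (cob F P n)

/-- Reduced simplicial cohomology of the order complex of `P`. -/
abbrev Hred (n : ℕ) := Zc F P n ⧸ (Bred F P n).comap (Zc F P n).subtype

/-! ### Ranked and uniform posets -/

/-- `rk` is a rank function: covers raise rank by exactly one. -/
def RankedWith (rk : P → ℕ) : Prop := ∀ x y : P, x ⋖ y → rk y = rk x + 1

/-- The poset is uniform: for each `x`, any two elements covered by `x` are connected by the
equivalence relation generated by "covering a common element". -/
def Uniform : Prop :=
  ∀ x a b : P, a ⋖ x → b ⋖ x →
    Relation.EqvGen (fun u w => u ⋖ x ∧ w ⋖ x ∧ ∃ c, c ⋖ u ∧ c ⋖ w) a b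

/-- The closed interval `[a,b]` is uniform as a ranked poset with minimal element `a`. -/
def UniformInterval (a b : P) : Prop :=
  ∀ x, a ≤ x → x ≤ b → ∀ c₁ c₂, (a ≤ c₁ ∧ c₁ ⋖ x) → (a ≤ c₂ ∧ c₂ ⋖ x) →
    Relation.EqvGen
      (fun u w => a ≤ u ∧ u ⋖ x ∧ a ≤ w ∧ w ⋖ x ∧ ∃ z, a ≤ z ∧ z ⋖ u ∧ z ⋖ w) c₁ c₂

end SplittingAlg
namespace SplittingAlg

variable {Γ : Type} [Fintype Γ] [PartialOrder Γ]


lemma exists_covBy_le' {a b : Γ} (h : a < b) : ∃ c, a ⋖ c ∧ c ≤ b := by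
  obtain ⟨c, hc, hcmin⟩ := Set.Finite.exists_minimalFor id {c | a < c ∧ c ≤ b}
    (Set.toFinite _) ⟨b, h, le_rfl⟩
  refine ⟨c, ⟨hc.1, fun z haz hzc => ?_⟩, hc.2⟩
  exact absurd (hcmin (j := z) ⟨haz, hzc.le.trans hc.2⟩ hzc.le) (not_le_of_gt hzc)

lemma exists_le_covBy' {u x : Γ} (h : u < x) : ∃ d, u ≤ d ∧ d ⋖ x := by
  obtain ⟨d, hd, hdmax⟩ := Set.Finite.exists_maximalFor id {d | u ≤ d ∧ d < x}
    (Set.toFinite _) ⟨u, le_rfl, h⟩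
  refine ⟨d, hd.1, hd.2, fun z hdz hzx => ?_⟩
  exact absurd (hdmax (j := z) ⟨hd.1.trans hdz.le, hzx⟩ hdz.le) (not_le_of_gt hdz)

variable {rk : Γ → ℕ} (hrk : RankedWith Γ rk)

include hrk in
lemma rk_lt_of_lt' : ∀ a b : Γ, a < b → rk a < rk b := by
  intro a
  induction a using WellFounded.induction (wellFounded_gt (α := Γ)) with
  | _ a ih =>
    intro b h
    obtain ⟨c, hac, hcb⟩ := exists_covBy_le' h
    have hc : rk c = rk a + 1 := hrk a c hac
    rcases eq_or_lt_of_le hcb with rfl | hlt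
    · omega
    · have := ih c hac.lt b hlt
      omega

include hrk in
lemma rk_le_of_le' {a b : Γ} (h : a ≤ b) : rk a ≤ rk b := by
  rcases eq_or_lt_of_le h with rfl | h
  · exact le_rfl
  · exact (rk_lt_of_lt' hrk a b h).le

include hrk in
lemma key_lemma
    (hconn : ∀ a b : Γ, a < b → rk a + 3 ≤ rk b →
      ∀ x y : Γ, a < x → x < b → a < y → y < b →
        Relation.ReflTransGen
          (fun u w => a < u ∧ u < b ∧ a < w ∧ w < b ∧ (u < w ∨ w < u)) x y) :
    ∀ k (a x : Γ), a ≤ x → rk x ≤ rk a + k →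
      ∀ c₁ c₂ : Γ, a ≤ c₁ → c₁ ⋖ x → a ≤ c₂ → c₂ ⋖ x →
      Relation.EqvGen
        (fun u w => a ≤ u ∧ u ⋖ x ∧ a ≤ w ∧ w ⋖ x ∧ ∃ z, a ≤ z ∧ z ⋖ u ∧ z ⋖ w) c₁ c₂ := by
  intro k
  induction k with
  | zero =>
    intro a x _ hbound c₁ c₂ hac₁ hc₁x _ _
    have h1 : rk a ≤ rk c₁ := rk_le_of_le' hrk hac₁
    have h2 : rk x = rk c₁ + 1 := hrk _ _ hc₁x
    omega
  | succ k IH =>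
    intro a x hax hbound c₁ c₂ hac₁ hc₁x hac₂ hc₂x
    have hr₁ : rk x = rk c₁ + 1 := hrk _ _ hc₁x
    have hr₂ : rk x = rk c₂ + 1 := hrk _ _ hc₂x
    have hle₁ : rk a ≤ rk c₁ := rk_le_of_le' hrk hac₁
    have hle₂ : rk a ≤ rk c₂ := rk_le_of_le' hrk hac₂
    by_cases hsmall : rk x ≤ rk a + 2
    · by_cases h1 : rk x ≤ rk a + 1
      · -- then c₁ = a = c₂
        have e1 : c₁ = a := by
          rcases eq_or_lt_of_le hac₁ with rfl | h
          · rfl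
          · have := rk_lt_of_lt' hrk a c₁ h; omega
        have e2 : c₂ = a := by
          rcases eq_or_lt_of_le hac₂ with rfl | h
          · rfl
          · have := rk_lt_of_lt' hrk a c₂ h; omega
        rw [e1, e2]
        exact Relation.EqvGen.refl a
      · -- rk x = rk a + 2, so a ⋖ c₁ and a ⋖ c₂
        have hcov : ∀ c : Γ, a ≤ c → c ⋖ x → a ⋖ c := by
          intro c hac hcx
          have hrc : rk x = rk c + 1 := hrk _ _ hcx
          have hlt : a < c := by
            rcases eq_or_lt_of_le hac with rfl | h
            · omega
            · exact h
          refine ⟨hlt, fun z h1 h2 => ?_⟩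
          have := rk_lt_of_lt' hrk a z h1
          have := rk_lt_of_lt' hrk z c h2
          omega
        exact Relation.EqvGen.rel _ _
          ⟨hac₁, hc₁x, hac₂, hc₂x, a, le_rfl, hcov c₁ hac₁ hc₁x, hcov c₂ hac₂ hc₂x⟩
    · -- rk x ≥ rk a + 3
      push_neg at hsmall
      have hax' : a < x := by
        rcases eq_or_lt_of_le hax with rfl | h
        · omega
        · exact h
      have hac₁' : a < c₁ := by
        rcases eq_or_lt_of_le hac₁ with rfl | h
        · omega
        · exact h
      have hac₂' : a < c₂ := by
        rcases eq_or_lt_of_le hac₂ with rfl | h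
        · omega
        · exact h
      set S := fun u w : Γ => a ≤ u ∧ u ⋖ x ∧ a ≤ w ∧ w ⋖ x ∧ ∃ z, a ≤ z ∧ z ⋖ u ∧ z ⋖ w
        with hS
      -- two coatoms over a common point strictly above a are related
      have pair : ∀ w f e : Γ, a < w → w ≤ f → f ⋖ x → w ≤ e → e ⋖ x →
          Relation.EqvGen S f e := by
        intro w f e haw hwf hfx hwe hex
        have hrw : rk a < rk w := rk_lt_of_lt' hrk a w haw
        have hwx : w ≤ x := hwf.trans hfx.lt.le
        have h := IH w x hwx (by omega) f e hwf hfx hwe hex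
        refine h.mono fun u v hv => ?_
        obtain ⟨h1, h2, h3, h4, z, hz1, hz2, hz3⟩ := hv
        exact ⟨haw.le.trans h1, h2, haw.le.trans h3, h4, z, haw.le.trans hz1, hz2, hz3⟩
      have hpath := hconn a x hax' (by omega) c₁ c₂ hac₁' hc₁x.lt hac₂' hc₂x.lt
      have aux : ∀ w : Γ, Relation.ReflTransGen
          (fun u w => a < u ∧ u < x ∧ a < w ∧ w < x ∧ (u < w ∨ w < u)) c₁ w →
          a < w → ∀ e, w ≤ e → e ⋖ x → Relation.EqvGen S c₁ e := by
        intro w hw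
        induction hw with
        | refl =>
          intro _ e hce hex
          rcases eq_or_lt_of_le hce with rfl | hlt
          · exact Relation.EqvGen.refl _
          · exact absurd hex.lt (hc₁x.2 hlt)
        | tail hw' hstep ih =>
          intro _ e hve hex
          obtain ⟨haw, hwx, hav, hvx, hcomp⟩ := hstep
          obtain ⟨f, hwf, hfx⟩ := exists_le_covBy' hwx
          have h1 : Relation.EqvGen S c₁ f := ih haw f hwf hfx
          have h2 : Relation.EqvGen S f e := by
            rcases hcomp with h | h
            · exact pair _ f e haw hwf hfx (h.le.trans hve) hex
            · exact pair _ f e hav (h.le.trans hwf) hfx hve hex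
          exact Relation.EqvGen.trans _ _ _ h1 h2
      exact aux c₂ hpath hac₂' c₂ le_rfl hc₂x


/-- If for all `a < b` with `rk b − rk a ≥ 3` the open interval `(a,b)` is
connected as a graph under comparability, then every closed interval `[a,b]` is uniform;
in particular `Γ` itself is uniform. -/
theorem uniform_of_intervals_connected (Γ : Type) [Fintype Γ] [PartialOrder Γ] [OrderBot Γ]
    (rk : Γ → ℕ) (hrk0 : rk ⊥ = 0) (hrk : RankedWith Γ rk)
    (hconn : ∀ a b : Γ, a < b → rk a + 3 ≤ rk b →
      ∀ x y : Γ, a < x → x < b → a < y → y < b →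
        Relation.ReflTransGen
          (fun u w => a < u ∧ u < b ∧ a < w ∧ w < b ∧ (u < w ∨ w < u)) x y) :
    (∀ a b : Γ, a < b → UniformInterval Γ a b) ∧ Uniform Γ := by
  have key := key_lemma hrk hconn
  constructor
  · intro a b _ x hax _ c₁ c₂ h1 h2
    exact key (rk x) a x hax (by omega) c₁ c₂ h1.1 h1.2 h2.1 h2.2
  · intro x a b hax hbx
    have h := key (rk x) ⊥ x bot_le (by omega) a b bot_le hax bot_le hbx
    exact h.mono fun u w hv => ⟨hv.2.1, hv.2.2.2.1, hv.2.2.2.2.choose,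
      hv.2.2.2.2.choose_spec.2.1, hv.2.2.2.2.choose_spec.2.2⟩

end SplittingAlg
end
end

section
/- Let Γ and Ω be finite uniform ranked posets with minimal elements *_Γ, *_Ω, and fix rank-1 elements v ∈ Γ, v' ∈ Ω. Form Θ = Γ ∨_{(v,v')} Ω by identifying *_Γ with *_Ω and v with v', with x < y in Θ iff x < y in Γ or in Ω. Then Θ is a uniform finite ranked poset, and the geometric realization of its order complex Δ(Θ \ {*}) is the wedge X_Γ ∨ X_Ω of the realizations of Δ(Γ \ {*_Γ}) and Δ(Ω \ {*_Ω}) at the common rank-1 vertex. -/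
open scoped Classical DirectSum
noncomputable section
namespace SplittingAlg

variable (Γ : Type) [Fintype Γ] [PartialOrder Γ] [OrderBot Γ]
variable (Ω : Type) [Fintype Ω] [PartialOrder Ω] [OrderBot Ω]
variable (v : Γ) (v' : Ω)

/-- The underlying set of the wedge `Γ ∨_{(v,v')} Ω`: the disjoint union of `Γ` and `Ω`
with `⊥_Ω` identified with `⊥_Γ` and `v'` identified with `v`. -/
def Wedge := Γ ⊕ {w : Ω // w ≠ ⊥ ∧ w ≠ v'}

instance : Fintype (Wedge Γ Ω v') := by unfold Wedge; infer_instance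

/-- The order on the wedge: two elements are comparable iff they are comparable in `Γ`
or in `Ω` (where `⊥_Γ` plays the role of `⊥_Ω` and `v` the role of `v'`). -/
def wle : Wedge Γ Ω v' → Wedge Γ Ω v' → Prop
  | .inl a, .inl b => a ≤ b
  | .inl a, .inr b => a = ⊥ ∨ (a = v ∧ v' ≤ b.1)
  | .inr _, .inl _ => False
  | .inr a, .inr b => a.1 ≤ b.1

variable (hv : ∀ a : Γ, a ≤ v → a = ⊥ ∨ a = v) (hv' : ∀ w : Ω, w ≤ v' → w = ⊥ ∨ w = v')

/-- The wedge as a partial order (for `v`, `v'` atoms of `Γ`, `Ω`). -/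
def wedgePO : PartialOrder (Wedge Γ Ω v') where
  le := wle Γ Ω v v'
  le_refl x := by cases x <;> simp [wle]
  le_trans x y z h1 h2 := by
    cases x with
    | inl a =>
      cases y with
      | inl b =>
        cases z with
        | inl c => exact le_trans h1 h2
        | inr c =>
          rcases h2 with h2 | ⟨rfl, h2⟩
          · subst h2; exact Or.inl (le_bot_iff.mp h1)
          · rcases hv a h1 with h | h
            · exact Or.inl h
            · exact Or.inr ⟨h, h2⟩
      | inr b =>
        cases z with
        | inl c => exact absurd h2 id
        | inr c =>
          rcases h1 with h1 | ⟨rfl, h1⟩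
          · exact Or.inl h1
          · exact Or.inr ⟨rfl, le_trans h1 h2⟩
    | inr a =>
      cases y with
      | inl b => exact absurd h1 id
      | inr b =>
        cases z with
        | inl c => exact absurd h2 id
        | inr c => exact le_trans h1 h2
  le_antisymm x y h1 h2 := by
    cases x with
    | inl a =>
      cases y with
      | inl b => exact congrArg Sum.inl (le_antisymm h1 h2)
      | inr b => exact absurd h2 id
    | inr a =>
      cases y with
      | inl b => exact absurd h1 id
      | inr b => exact congrArg Sum.inr (Subtype.ext (le_antisymm h1 h2))

/-- The wedge has `⊥ = ⊥_Γ` as unique minimal element. -/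
def wedgeOB : @OrderBot (Wedge Γ Ω v') (wedgePO Γ Ω v v' hv).toLE :=
  letI := wedgePO Γ Ω v v' hv
  { bot := Sum.inl ⊥
    bot_le := fun x => by
      cases x with
      | inl a => exact (bot_le (a := a) : a ≥ (⊥ : Γ))
      | inr a => exact Or.inl rfl }

/-- The rank function of the wedge. -/
def wrk (rkΓ : Γ → ℕ) (rkΩ : Ω → ℕ) : Wedge Γ Ω v' → ℕ :=
  Sum.elim rkΓ (fun w => rkΩ w.1)

/-- Membership in the `Γ`-part of the wedge. -/
def inGamma : Wedge Γ Ω v' → Prop := fun t => ∃ a : Γ, t = Sum.inl a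

/-- Membership in the `Ω`-part of the wedge (the common point `v̄` and `⊥` included). -/
def inOmega : Wedge Γ Ω v' → Prop :=
  fun t => (∃ w, t = Sum.inr w) ∨ t = Sum.inl v ∨ t = Sum.inl ⊥

end SplittingAlg
namespace SplittingAlg

/-- Auxiliary: map an `EqvGen` proof along a relation-preserving function. -/
theorem eqvgen_map_aux {α β : Type*} {r : α → α → Prop} {s : β → β → Prop} (f : α → β)
    (h : ∀ x y, r x y → s (f x) (f y)) {a b : α} (hab : Relation.EqvGen r a b) :
    Relation.EqvGen s (f a) (f b) := by
  induction hab with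
  | rel x y hxy => exact Relation.EqvGen.rel _ _ (h x y hxy)
  | refl x => exact Relation.EqvGen.refl _
  | symm x y _ ih => exact Relation.EqvGen.symm _ _ ih
  | trans x y z _ _ ih1 ih2 => exact Relation.EqvGen.trans _ _ _ ih1 ih2

section WedgeAux
variable (Γ : Type) [PartialOrder Γ] [OrderBot Γ]
variable (Ω : Type) [PartialOrder Ω] [OrderBot Ω]
variable (v : Γ) (v' : Ω)

/-- Auxiliary: the strict order on the wedge, as a plain definition. -/
def wltA (x y : Wedge Γ Ω v') : Prop := wle Γ Ω v v' x y ∧ ¬ wle Γ Ω v v' y x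

/-- Auxiliary: the covering relation on the wedge, as a plain definition. -/
def wcovA (x y : Wedge Γ Ω v') : Prop :=
  wltA Γ Ω v v' x y ∧ ∀ c, wltA Γ Ω v v' x c → ¬ wltA Γ Ω v v' c y

/-- Auxiliary: the canonical map from `Ω` to the wedge. -/
def phiW (w : Ω) : Wedge Γ Ω v' :=
  if h1 : w = ⊥ then Sum.inl ⊥ else if h2 : w = v' then Sum.inl v else Sum.inr ⟨w, h1, h2⟩

end WedgeAux

/-- The wedge `Θ = Γ ∨_{(v,v')} Ω` of two finite uniform ranked posets along
rank-one elements `v ∈ Γ`, `v' ∈ Ω` is a uniform finite ranked poset, and its order complex is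
the wedge of the order complexes of `Γ \ {⊥}` and `Ω \ {⊥}`: every pair of comparable elements
of `Θ \ {⊥}` lies entirely in the `Γ`-part or entirely in the `Ω`-part, and the two parts meet
exactly in the common point `v̄ = v = v'`. -/
theorem wedge_uniform_and_order_complex (Γ : Type) [Fintype Γ] [PartialOrder Γ] [OrderBot Γ]
    (Ω : Type) [Fintype Ω] [PartialOrder Ω] [OrderBot Ω]
    (rkΓ : Γ → ℕ) (hrkΓ0 : rkΓ ⊥ = 0) (hrkΓ : RankedWith Γ rkΓ)
    (rkΩ : Ω → ℕ) (hrkΩ0 : rkΩ ⊥ = 0) (hrkΩ : RankedWith Ω rkΩ)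
    (hUΓ : Uniform Γ) (hUΩ : Uniform Ω)
    (v : Γ) (v' : Ω) (hvrk : rkΓ v = 1) (hv'rk : rkΩ v' = 1)
    (hv : ∀ a : Γ, a ≤ v → a = ⊥ ∨ a = v) (hv' : ∀ w : Ω, w ≤ v' → w = ⊥ ∨ w = v') :
    @Uniform (Wedge Γ Ω v') (wedgePO Γ Ω v v' hv) ∧
    @RankedWith (Wedge Γ Ω v') (wedgePO Γ Ω v v' hv) (wrk Γ Ω v' rkΓ rkΩ) ∧
    (∀ x y : Wedge Γ Ω v', x ≠ Sum.inl ⊥ → (wedgePO Γ Ω v v' hv).lt x y →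
      ((inGamma Γ Ω v' x ∧ inGamma Γ Ω v' y) ∨ (inOmega Γ Ω v v' x ∧ inOmega Γ Ω v v' y))) ∧
    (∀ t : Wedge Γ Ω v', t ≠ Sum.inl ⊥ → inGamma Γ Ω v' t → inOmega Γ Ω v v' t →
      t = Sum.inl v) := by
  have hvne : v ≠ ⊥ := fun h => by rw [h, hrkΓ0] at hvrk; exact absurd hvrk (by norm_num)
  have hv'ne : v' ≠ ⊥ := fun h => by rw [h, hrkΩ0] at hv'rk; exact absurd hv'rk (by norm_num)
  -- basic order facts, phrased with the definitional copies `wltA`, `wcovA`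
  have lt_ll : ∀ a b : Γ, wltA Γ Ω v v' (Sum.inl a) (Sum.inl b) ↔ a < b := by
    intro a b; rw [lt_iff_le_not_ge]; exact Iff.rfl
  have lt_rr : ∀ a b : {w : Ω // w ≠ ⊥ ∧ w ≠ v'},
      wltA Γ Ω v v' (Sum.inr a) (Sum.inr b) ↔ a.1 < b.1 := by
    intro a b; rw [lt_iff_le_not_ge]; exact Iff.rfl
  have not_lt_rl : ∀ (a : {w : Ω // w ≠ ⊥ ∧ w ≠ v'}) (b : Γ),
      ¬ wltA Γ Ω v v' (Sum.inr a) (Sum.inl b) := fun a b h => h.1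
  have lt_lr : ∀ (a : Γ) (b : {w : Ω // w ≠ ⊥ ∧ w ≠ v'}),
      wltA Γ Ω v v' (Sum.inl a) (Sum.inr b) ↔ (a = ⊥ ∨ (a = v ∧ v' ≤ b.1)) := by
    intro a b
    constructor
    · intro h; exact h.1
    · intro h; exact ⟨h, fun hf => hf⟩
  -- cover characterizations
  have cov_ll : ∀ a b : Γ, wcovA Γ Ω v v' (Sum.inl a) (Sum.inl b) ↔ a ⋖ b := by
    intro a b
    constructor
    · rintro ⟨h1, h2⟩
      exact ⟨(lt_ll a b).mp h1, fun c hc1 hc2 =>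
        h2 (Sum.inl c) ((lt_ll a c).mpr hc1) ((lt_ll c b).mpr hc2)⟩
    · rintro ⟨h1, h2⟩
      refine ⟨(lt_ll a b).mpr h1, ?_⟩
      rintro (c | c) hc1 hc2
      · exact h2 ((lt_ll a c).mp hc1) ((lt_ll c b).mp hc2)
      · exact not_lt_rl c b hc2
  have cov_rr : ∀ a b : {w : Ω // w ≠ ⊥ ∧ w ≠ v'},
      wcovA Γ Ω v v' (Sum.inr a) (Sum.inr b) ↔ a.1 ⋖ b.1 := by
    intro a b
    constructor
    · rintro ⟨h1, h2⟩
      refine ⟨(lt_rr a b).mp h1, fun c hc1 hc2 => ?_⟩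
      have hcb : c ≠ ⊥ := fun h => by subst h; exact absurd hc1 (by simp)
      have hcv : c ≠ v' := fun h => by
        subst h
        rcases hv' a.1 hc1.le with h | h
        · exact a.2.1 h
        · exact a.2.2 h
      exact h2 (Sum.inr ⟨c, hcb, hcv⟩) ((lt_rr a ⟨c, hcb, hcv⟩).mpr hc1)
        ((lt_rr ⟨c, hcb, hcv⟩ b).mpr hc2)
    · rintro ⟨h1, h2⟩
      refine ⟨(lt_rr a b).mpr h1, ?_⟩
      rintro (c | c) hc1 hc2
      · exact not_lt_rl a c hc1
      · exact h2 ((lt_rr a c).mp hc1) ((lt_rr c b).mp hc2)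
  have cov_vl : ∀ b : {w : Ω // w ≠ ⊥ ∧ w ≠ v'},
      wcovA Γ Ω v v' (Sum.inl v) (Sum.inr b) ↔ v' ⋖ b.1 := by
    intro b
    constructor
    · rintro ⟨h1, h2⟩
      have hle : v' ≤ b.1 := by
        rcases (lt_lr v b).mp h1 with h | ⟨_, h⟩
        · exact absurd h hvne
        · exact h
      refine ⟨lt_of_le_of_ne hle (Ne.symm b.2.2), fun c hc1 hc2 => ?_⟩
      have hcb : c ≠ ⊥ := fun h => by subst h; exact absurd hc1 (by simp)
      have hcv : c ≠ v' := hc1.ne'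
      exact h2 (Sum.inr ⟨c, hcb, hcv⟩) ((lt_lr v ⟨c, hcb, hcv⟩).mpr (Or.inr ⟨rfl, hc1.le⟩))
        ((lt_rr ⟨c, hcb, hcv⟩ b).mpr hc2)
    · rintro ⟨h1, h2⟩
      refine ⟨(lt_lr v b).mpr (Or.inr ⟨rfl, h1.le⟩), ?_⟩
      rintro (c | c) hc1 hc2
      · rcases (lt_lr c b).mp hc2 with h | ⟨h, _⟩
        · subst h; exact absurd ((lt_ll v ⊥).mp hc1) (by simp)
        · rw [h] at hc1; exact absurd ((lt_ll v v).mp hc1) (lt_irrefl v)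
      · have hlt : v' < c.1 := by
          rcases (lt_lr v c).mp hc1 with h | ⟨_, h⟩
          · exact absurd h hvne
          · exact lt_of_le_of_ne h (Ne.symm c.2.2)
        exact h2 hlt ((lt_rr c b).mp hc2)
  have cov_bl : ∀ b : {w : Ω // w ≠ ⊥ ∧ w ≠ v'},
      wcovA Γ Ω v v' (Sum.inl ⊥) (Sum.inr b) ↔ (⊥ : Ω) ⋖ b.1 := by
    intro b
    constructor
    · rintro ⟨_, h2⟩
      refine ⟨bot_lt_iff_ne_bot.mpr b.2.1, fun c hc1 hc2 => ?_⟩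
      have hcb : c ≠ ⊥ := hc1.ne'
      by_cases hcv : c = v'
      · subst hcv
        exact h2 (Sum.inl v) ((lt_ll ⊥ v).mpr (bot_lt_iff_ne_bot.mpr hvne))
          ((lt_lr v b).mpr (Or.inr ⟨rfl, hc2.le⟩))
      · exact h2 (Sum.inr ⟨c, hcb, hcv⟩) ((lt_lr ⊥ ⟨c, hcb, hcv⟩).mpr (Or.inl rfl))
          ((lt_rr ⟨c, hcb, hcv⟩ b).mpr hc2)
    · rintro ⟨h1, h2⟩
      refine ⟨(lt_lr ⊥ b).mpr (Or.inl rfl), ?_⟩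
      rintro (c | c) hc1 hc2
      · rcases (lt_lr c b).mp hc2 with h | ⟨h, hle⟩
        · subst h; exact absurd ((lt_ll ⊥ ⊥).mp hc1) (lt_irrefl ⊥)
        · subst h
          exact h2 (bot_lt_iff_ne_bot.mpr hv'ne) (lt_of_le_of_ne hle (Ne.symm b.2.2))
      · exact h2 (bot_lt_iff_ne_bot.mpr c.2.1) ((lt_rr c b).mp hc2)
  have botCovV : (⊥ : Γ) ⋖ v := by
    refine ⟨bot_lt_iff_ne_bot.mpr hvne, fun c hc1 hc2 => ?_⟩
    rcases hv c hc2.le with h | h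
    · exact hc1.ne' h
    · exact hc2.ne h
  -- phi lemmas
  have phi_bot : phiW Γ Ω v v' ⊥ = Sum.inl ⊥ := by unfold phiW; exact dif_pos rfl
  have phi_v' : phiW Γ Ω v v' v' = Sum.inl v := by
    unfold phiW; exact (dif_neg hv'ne).trans (dif_pos rfl)
  have phi_other : ∀ (w : Ω) (h1 : w ≠ ⊥) (h2 : w ≠ v'),
      phiW Γ Ω v v' w = Sum.inr ⟨w, h1, h2⟩ := by
    intro w h1 h2; unfold phiW; exact (dif_neg h1).trans (dif_neg h2)
  have cov_phi : ∀ c u : Ω, c ⋖ u → wcovA Γ Ω v v' (phiW Γ Ω v v' c) (phiW Γ Ω v v' u) := by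
    intro c u h
    have hune : u ≠ ⊥ := fun e => by subst e; exact absurd h.lt (not_lt_bot)
    by_cases huv : u = v'
    · subst huv
      have hc : c = ⊥ := (hv' c h.lt.le).resolve_right h.lt.ne
      subst hc
      rw [phi_bot, phi_v']
      exact (cov_ll ⊥ v).mpr botCovV
    · rw [phi_other u hune huv]
      by_cases hcb : c = ⊥
      · subst hcb; rw [phi_bot]; exact (cov_bl ⟨u, hune, huv⟩).mpr h
      by_cases hcv : c = v'
      · subst hcv; rw [phi_v']; exact (cov_vl ⟨u, hune, huv⟩).mpr h
      · rw [phi_other c hcb hcv]; exact (cov_rr _ _).mpr h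
  have cov_decomp : ∀ (a : Wedge Γ Ω v') (X : {w : Ω // w ≠ ⊥ ∧ w ≠ v'}),
      wcovA Γ Ω v v' a (Sum.inr X) → ∃ A : Ω, A ⋖ X.1 ∧ phiW Γ Ω v v' A = a := by
    rintro (a' | a') X h
    · rcases (lt_lr a' X).mp h.1 with h1 | ⟨h1, _⟩
      · subst h1; exact ⟨⊥, (cov_bl X).mp h, phi_bot⟩
      · subst h1; exact ⟨v', (cov_vl X).mp h, phi_v'⟩
    · exact ⟨a'.1, (cov_rr a' X).mp h, by rw [phi_other a'.1 a'.2.1 a'.2.2]⟩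
  refine ⟨?_, ?_, ?_, ?_⟩
  · -- Uniform
    rintro (X | X) a b ha hb
    · have ha' : wcovA Γ Ω v v' a (Sum.inl X) := ⟨ha.1, fun c h1 h2 => ha.2 h1 h2⟩
      have hb' : wcovA Γ Ω v v' b (Sum.inl X) := ⟨hb.1, fun c h1 h2 => hb.2 h1 h2⟩
      obtain ⟨A, rfl⟩ : ∃ A, a = Sum.inl A := by
        match a, ha' with
        | .inl A, _ => exact ⟨A, rfl⟩
        | .inr A, ha' => exact absurd ha'.1 (not_lt_rl A X)
      obtain ⟨B, rfl⟩ : ∃ B, b = Sum.inl B := by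
        match b, hb' with
        | .inl B, _ => exact ⟨B, rfl⟩
        | .inr B, hb' => exact absurd hb'.1 (not_lt_rl B X)
      have key := eqvgen_map_aux (s := fun u w : Wedge Γ Ω v' =>
          wcovA Γ Ω v v' u (Sum.inl X) ∧ wcovA Γ Ω v v' w (Sum.inl X) ∧
          ∃ c, wcovA Γ Ω v v' c u ∧ wcovA Γ Ω v v' c w)
        (Sum.inl : Γ → Wedge Γ Ω v') ?_
        (hUΓ X A B ((cov_ll A X).mp ha') ((cov_ll B X).mp hb'))
      · exact Relation.EqvGen.mono (fun u w hr =>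
          ⟨⟨hr.1.1, fun c => hr.1.2 c⟩, ⟨hr.2.1.1, fun c => hr.2.1.2 c⟩,
            hr.2.2.choose, ⟨hr.2.2.choose_spec.1.1, fun c => hr.2.2.choose_spec.1.2 c⟩,
            ⟨hr.2.2.choose_spec.2.1, fun c => hr.2.2.choose_spec.2.2 c⟩⟩) _ _ key
      · rintro u w ⟨h1, h2, c, hc1, hc2⟩
        exact ⟨(cov_ll u X).mpr h1, (cov_ll w X).mpr h2, Sum.inl c,
          (cov_ll c u).mpr hc1, (cov_ll c w).mpr hc2⟩
    · have ha' : wcovA Γ Ω v v' a (Sum.inr X) := ⟨ha.1, fun c h1 h2 => ha.2 h1 h2⟩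
      have hb' : wcovA Γ Ω v v' b (Sum.inr X) := ⟨hb.1, fun c h1 h2 => hb.2 h1 h2⟩
      obtain ⟨A, hA, rfl⟩ := cov_decomp a X ha'
      obtain ⟨B, hB, rfl⟩ := cov_decomp b X hb'
      have hX : phiW Γ Ω v v' X.1 = Sum.inr X := by rw [phi_other X.1 X.2.1 X.2.2]
      have key := eqvgen_map_aux (s := fun u w : Wedge Γ Ω v' =>
          wcovA Γ Ω v v' u (Sum.inr X) ∧ wcovA Γ Ω v v' w (Sum.inr X) ∧
          ∃ c, wcovA Γ Ω v v' c u ∧ wcovA Γ Ω v v' c w)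
        (phiW Γ Ω v v') ?_ (hUΩ X.1 A B hA hB)
      · exact Relation.EqvGen.mono (fun u w hr =>
          ⟨⟨hr.1.1, fun c => hr.1.2 c⟩, ⟨hr.2.1.1, fun c => hr.2.1.2 c⟩,
            hr.2.2.choose, ⟨hr.2.2.choose_spec.1.1, fun c => hr.2.2.choose_spec.1.2 c⟩,
            ⟨hr.2.2.choose_spec.2.1, fun c => hr.2.2.choose_spec.2.2 c⟩⟩) _ _ key
      · rintro u w ⟨h1, h2, c, hc1, hc2⟩
        exact ⟨hX ▸ cov_phi u X.1 h1, hX ▸ cov_phi w X.1 h2, phiW Γ Ω v v' c,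
          cov_phi c u hc1, cov_phi c w hc2⟩
  · -- RankedWith
    rintro (a | a) (b | b) hxy
    · exact hrkΓ a b ((cov_ll a b).mp ⟨hxy.1, fun c h1 h2 => hxy.2 h1 h2⟩)
    · have hxy' : wcovA Γ Ω v v' (Sum.inl a) (Sum.inr b) := ⟨hxy.1, fun c h1 h2 => hxy.2 h1 h2⟩
      rcases (lt_lr a b).mp hxy'.1 with h1 | ⟨h1, _⟩
      · subst h1
        have h := hrkΩ ⊥ b.1 ((cov_bl b).mp hxy')
        show rkΩ b.1 = rkΓ ⊥ + 1
        rw [h, hrkΩ0, hrkΓ0]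
      · rw [h1] at hxy'
        have h := hrkΩ v' b.1 ((cov_vl b).mp hxy')
        show rkΩ b.1 = rkΓ a + 1
        rw [h, hv'rk, h1, hvrk]
    · exact absurd (hxy.1 : wltA Γ Ω v v' (Sum.inr a) (Sum.inl b)) (not_lt_rl a b)
    · exact hrkΩ _ _ ((cov_rr a b).mp ⟨hxy.1, fun c h1 h2 => hxy.2 h1 h2⟩)
  · -- the order complex splits into the two parts
    rintro (a | a) (b | b) hx hxy
    · exact Or.inl ⟨⟨a, rfl⟩, ⟨b, rfl⟩⟩
    · have hxy' : wltA Γ Ω v v' (Sum.inl a) (Sum.inr b) := hxy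
      rcases (lt_lr a b).mp hxy' with h1 | ⟨h1, _⟩
      · exact absurd (congrArg Sum.inl h1) hx
      · subst h1
        exact Or.inr ⟨Or.inr (Or.inl rfl), Or.inl ⟨b, rfl⟩⟩
    · exact absurd (hxy : wltA Γ Ω v v' (Sum.inr a) (Sum.inl b)) (not_lt_rl a b)
    · exact Or.inr ⟨Or.inl ⟨a, rfl⟩, Or.inl ⟨b, rfl⟩⟩
  · -- the intersection of the two parts is the common point
    intro t ht hg ho
    obtain ⟨a, rfl⟩ : ∃ a, t = Sum.inl a := hg
    rcases (ho : (∃ w, (Sum.inl a : Wedge Γ Ω v') = Sum.inr w) ∨ _ ∨ _) with ⟨w, hw⟩ | h | h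
    · exact absurd hw (by simp)
    · exact h
    · exact absurd h ht

end SplittingAlg
end
end
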